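/- Let C be a finite multiset of instance values such that for all (y, ŷ), (y', ŷ') in C, y < y' implies ŷ ≤ ŷ' and y > y' implies ŷ ≥ ŷ'. Then for every sub-multiset C' ⊆ C with P(C') ≥ 1 and N(C') ≥ 1, ROCAUC(C') ≥ 1/2. -/

import Mathlib

/-- An instance value: a label (`true` = positive, i.e. `y = 1`;
`false` = negative, i.e. `y = 0`) together with a real prediction score. -/
abbrev Inst : Type := Bool × ℝ

/-- `P C`: the number of positive elements of `C`. -/
def P (C : Multiset Inst) : ℕ := (C.filter (fun c => c.1 = true)).card

/-- `N C`: the number of negative elements of `C`. -/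
def N (C : Multiset Inst) : ℕ := (C.filter (fun c => c.1 = false)).card

/-- `TP C t`: the number of positives of `C` with prediction strictly above `t`. -/
noncomputable def TP (C : Multiset Inst) (t : ℝ) : ℕ :=
  (C.filter (fun c => c.1 = true ∧ t < c.2)).card

/-- `FP C t`: the number of negatives of `C` with prediction strictly above `t`. -/
noncomputable def FP (C : Multiset Inst) (t : ℝ) : ℕ :=
  (C.filter (fun c => c.1 = false ∧ t < c.2)).card

/-- The ROC/PR supporting points `(TP, FP)` of `C`, listed in order of
decreasing threshold, for `t` ranging over the prediction values occurring in
`C` together with `t = -∞` (the latter yielding the final point `(P C, N C)`). -/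
noncomputable def supportingPoints (C : Multiset Inst) : List (ℝ × ℝ) :=
  (((C.map Prod.snd).toFinset.sort (· ≤ ·)).reverse.map
    (fun t => ((TP C t : ℝ), (FP C t : ℝ)))) ++ [((P C : ℝ), (N C : ℝ))]

/-- The trapezoidal sum `Σ_{i=2}^{k} |FP_i − FP_{i−1}| · (TP_i + TP_{i−1})/2`
over a list of `(TP, FP)` points. -/
noncomputable def trapROC : List (ℝ × ℝ) → ℝ
  | [] => 0
  | [_] => 0
  | a :: b :: l => |b.2 - a.2| * (b.1 + a.1) / 2 + trapROC (b :: l)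

/-- The area under the ROC curve of `C` (defined whenever `P C ≥ 1` and `N C ≥ 1`). -/
noncomputable def ROCAUC (C : Multiset Inst) : ℝ :=
  trapROC (supportingPoints C) / ((P C : ℝ) * (N C : ℝ))

/-- The trapezoidal sum `Σ_{i=2}^{k} |TP_i − TP_{i−1}| ·
(TP_i/(TP_i+FP_i) + TP_{i−1}/(TP_{i−1}+FP_{i−1}))/2` over a list of `(TP, FP)`
points; in `ℝ`, division by zero yields `0`, realizing the convention `0/0 = 0`. -/
noncomputable def trapPR : List (ℝ × ℝ) → ℝ
  | [] => 0
  | [_] => 0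
  | a :: b :: l =>
      |b.1 - a.1| * (b.1 / (b.1 + b.2) + a.1 / (a.1 + a.2)) / 2 + trapPR (b :: l)

/-- The (linearly interpolated) area under the PR curve of `C`
(defined whenever `P C ≥ 1`). -/
noncomputable def PRAUC (C : Multiset Inst) : ℝ :=
  trapPR (supportingPoints C) / (P C : ℝ)

/-- If for all `(y, ŷ), (y', ŷ')` in `C`, `y < y'` implies
`ŷ ≤ ŷ'` and `y > y'` implies `ŷ ≥ ŷ'`, then every sub-multiset `C' ⊆ C` with
`P C' ≥ 1` and `N C' ≥ 1` has `ROCAUC C' ≥ 1/2`. -/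
lemma trap_step (p : ℝ) (a b : ℝ × ℝ) (ha : 0 ≤ a.1 ∧ 0 ≤ a.2 ∧ (a.2 = 0 ∨ a.1 = p))
    (hb : 0 ≤ b.1 ∧ 0 ≤ b.2 ∧ (b.2 = 0 ∨ b.1 = p)) (hab : a.2 ≤ b.2) :
    b.2 * p / 2 - a.2 * p / 2 ≤ |b.2 - a.2| * (b.1 + a.1) / 2 := by
  rw [abs_of_nonneg (by linarith)]
  rcases hb.2.2 with h0 | hp
  · have ha0 : a.2 = 0 := le_antisymm (h0 ▸ hab) ha.2.1
    have h1 : b.2 * p = 0 := by rw [h0]; ring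
    have h2 : a.2 * p = 0 := by rw [ha0]; ring
    have h3 : 0 ≤ (b.2 - a.2) * (b.1 + a.1) / 2 := by
      have := mul_nonneg (by linarith : (0:ℝ) ≤ b.2 - a.2) (by linarith : (0:ℝ) ≤ b.1 + a.1)
      linarith
    linarith
  · nlinarith [mul_nonneg (by linarith : (0:ℝ) ≤ b.2 - a.2) ha.1]

lemma trap_lower (p : ℝ) : ∀ (L : List (ℝ × ℝ)) (a q : ℝ × ℝ),
    (∀ x ∈ a :: (L ++ [q]), 0 ≤ x.1 ∧ 0 ≤ x.2 ∧ (x.2 = 0 ∨ x.1 = p)) →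
    List.Chain' (fun u v : ℝ × ℝ => u.2 ≤ v.2) (a :: (L ++ [q])) →
    q.2 * p / 2 - a.2 * p / 2 ≤ trapROC (a :: (L ++ [q])) := by
  intro L
  induction L with
  | nil =>
    intro a q hmem hchain
    have hab : a.2 ≤ q.2 := (List.isChain_cons_cons.mp hchain).1
    have := trap_step p a q (hmem a (by simp)) (hmem q (by simp)) hab
    simp only [List.nil_append, trapROC]
    linarith
  | cons b l ih =>
    intro a q hmem hchain
    simp only [List.cons_append] at hmem hchain ⊢
    obtain ⟨hab, hchain'⟩ := List.isChain_cons_cons.mp hchain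
    have hIH := ih b q (fun x hx => hmem x (by simp at hx ⊢; tauto)) hchain'
    have hstep := trap_step p a b (hmem a (by simp)) (hmem b (by simp)) hab
    rw [trapROC]
    linarith

theorem rocauc_ge_half_of_perfect_with_ties (C : Multiset Inst)
    (hperf : ∀ c ∈ C, ∀ c' ∈ C,
      (c.1 < c'.1 → c.2 ≤ c'.2) ∧ (c'.1 < c.1 → c'.2 ≤ c.2)) :
    ∀ C' ≤ C, 1 ≤ P C' → 1 ≤ N C' → 1 / 2 ≤ ROCAUC C' := by
  intro C' hC'C hP hN
  -- key: if FP C' t ≠ 0 then TP C' t = P C'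
  have hkey : ∀ t : ℝ, (FP C' t : ℕ) ≠ 0 → (TP C' t : ℕ) = P C' := by
    intro t h
    rw [FP, Ne, Multiset.card_eq_zero, Multiset.filter_eq_nil] at h
    push_neg at h
    obtain ⟨c, hc, hcf, hct⟩ := h
    rw [TP, P]
    congr 1
    apply Multiset.filter_congr
    intro x hx
    constructor
    · exact fun h => h.1
    · intro hxt
      refine ⟨hxt, lt_of_lt_of_le hct ?_⟩
      have := (hperf c (Multiset.mem_of_le hC'C hc) x (Multiset.mem_of_le hC'C hx)).1
      apply this
      rw [hcf, hxt]
      exact Bool.false_lt_true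
  -- FP antitone
  have hFPanti : ∀ s t : ℝ, s ≤ t → FP C' t ≤ FP C' s := by
    intro s t hst
    exact Multiset.card_le_card (Multiset.monotone_filter_right _
      (fun b hb => ⟨hb.1, lt_of_le_of_lt hst hb.2⟩))
  have hFPleN : ∀ t : ℝ, FP C' t ≤ N C' := by
    intro t
    exact Multiset.card_le_card (Multiset.monotone_filter_right _ (fun b hb => hb.1))
  set f : ℝ → ℝ × ℝ := fun t => ((TP C' t : ℝ), (FP C' t : ℝ)) with hf
  set l := ((C'.map Prod.snd).toFinset.sort (· ≤ ·)) with hl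
  -- l is nonempty
  have hC'ne : C' ≠ 0 := by
    intro h; rw [h] at hP; simp [P] at hP
  have hlne : l ≠ [] := by
    rw [hl, Ne, ← List.length_eq_zero_iff, Finset.length_sort, ← Ne]
    rw [Ne, Finset.card_eq_zero, ← Ne, ← Finset.nonempty_iff_ne_empty]
    obtain ⟨a, ha⟩ := Multiset.exists_mem_of_ne_zero hC'ne
    exact ⟨a.2, by rw [Multiset.mem_toFinset]; exact Multiset.mem_map_of_mem _ ha⟩
  obtain ⟨l', tmax, hdecomp⟩ := (List.eq_nil_or_concat l).resolve_left hlne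
  rw [List.concat_eq_append] at hdecomp
  have hsorted : List.Pairwise (· ≤ ·) l := Finset.pairwise_sort _ _
  have htmax_max : ∀ c ∈ C', c.2 ≤ tmax := by
    intro c hc
    have hmem : c.2 ∈ l := by
      rw [hl, Finset.mem_sort, Multiset.mem_toFinset]
      exact Multiset.mem_map_of_mem _ hc
    rw [hdecomp] at hmem hsorted
    rcases List.mem_append.mp hmem with h | h
    · exact (List.pairwise_append.mp hsorted).2.2 _ h _ (by simp)
    · simp at h; exact le_of_eq h
  have hFPtmax : FP C' tmax = 0 := by
    rw [FP, Multiset.card_eq_zero, Multiset.filter_eq_nil]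
    intro a ha h
    exact absurd (htmax_max a ha) (not_le.mpr h.2)
  -- supportingPoints decomposition
  have hsp : supportingPoints C' = f tmax :: (l'.reverse.map f ++ [((P C' : ℝ), (N C' : ℝ))]) := by
    rw [supportingPoints, ← hl, hdecomp]
    simp [hf]
  -- membership property
  have hmem : ∀ x ∈ supportingPoints C', 0 ≤ x.1 ∧ 0 ≤ x.2 ∧ (x.2 = 0 ∨ x.1 = (P C' : ℝ)) := by
    intro x hx
    rw [supportingPoints, List.mem_append] at hx
    rcases hx with hx | hx
    · obtain ⟨t, _, rfl⟩ := List.mem_map.mp hx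
      refine ⟨by positivity, by positivity, ?_⟩
      by_cases h : FP C' t = 0
      · left; simp [h]
      · right
        show ((TP C' t : ℕ) : ℝ) = ((P C' : ℕ) : ℝ)
        exact_mod_cast hkey t h
    · simp at hx
      refine ⟨by rw [hx]; positivity, by rw [hx]; positivity, Or.inr (by rw [hx])⟩
  -- chain property
  have hchain : List.Chain' (fun u v : ℝ × ℝ => u.2 ≤ v.2) (supportingPoints C') := by
    rw [supportingPoints, ← hl]
    unfold List.Chain'
    rw [List.isChain_append]
    refine ⟨?_, by simp, ?_⟩
    · rw [List.isChain_map, List.isChain_reverse]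
      apply List.IsChain.imp _ hsorted.isChain
      intro a b hab
      show ((FP C' b : ℕ) : ℝ) ≤ ((FP C' a : ℕ) : ℝ)
      exact_mod_cast hFPanti a b hab
    · intro x hx y hy
      have hxmem : x ∈ l.reverse.map f := List.mem_of_mem_getLast? hx
      obtain ⟨t, _, rfl⟩ := List.mem_map.mp hxmem
      simp at hy
      rw [← hy]
      show ((FP C' t : ℕ) : ℝ) ≤ ((N C' : ℕ) : ℝ)
      exact_mod_cast hFPleN t
  -- apply trap_lower
  have htrap := trap_lower (P C' : ℝ) (l'.reverse.map f) (f tmax) ((P C' : ℝ), (N C' : ℝ))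
    (by rw [← hsp]; exact hmem) (by rw [← hsp]; exact hchain)
  rw [← hsp] at htrap
  have hfFP : (f tmax).2 = 0 := by simp [hf, hFPtmax]
  have hsnd : (((P C' : ℝ), (N C' : ℝ)) : ℝ × ℝ).2 = (N C' : ℝ) := rfl
  rw [hfFP, hsnd] at htrap
  have hPpos : (0 : ℝ) < (P C' : ℝ) := by exact_mod_cast hP
  have hNpos : (0 : ℝ) < (N C' : ℝ) := by exact_mod_cast hN
  rw [ROCAUC, le_div_iff₀ (by positivity)]
  nlinarith [htrap]
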